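/- arXiv:2201.09000 — 2 statements merged into one kernel-verified Lean document; each statement's English description precedes it below -/
import Mathlib

section
/- For f^L(x)=x₁²+(x₁x₂−1)² and f^U(x)=2x₁²+(x₁x₂−1)² on ℝ², there is no exact (type-2 weakly) Pareto optimal point: for every x*∈ℝ² there exists x∈ℝ² with f^L(x)<f^L(x*) and f^U(x)<f^U(x*). -/
/-- Example 3.1: the problem has no exact (type-2 weakly) Pareto optimal point: every
x* ∈ ℝ² is strictly dominated in both components. -/
theorem no_exact_weak_pareto :
    ∀ xstar : ℝ × ℝ, ∃ x : ℝ × ℝ,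
      x.1 ^ 2 + (x.1 * x.2 - 1) ^ 2 < xstar.1 ^ 2 + (xstar.1 * xstar.2 - 1) ^ 2 ∧
      2 * x.1 ^ 2 + (x.1 * x.2 - 1) ^ 2 < 2 * xstar.1 ^ 2 + (xstar.1 * xstar.2 - 1) ^ 2 := by
  intro xstar
  set a := xstar.1
  set b := xstar.2
  set v : ℝ := a ^ 2 + (a * b - 1) ^ 2 with hv
  have hvpos : 0 < v := by
    rcases eq_or_ne a 0 with h | h
    · simp [hv, h]
    · have : 0 < a ^ 2 := by positivity
      nlinarith [sq_nonneg (a * b - 1)]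
  have htpos : 0 < v / 3 := by linarith
  set s := Real.sqrt (v / 3) with hs
  have hspos : 0 < s := Real.sqrt_pos.mpr htpos
  refine ⟨(s, 1 / s), ?_, ?_⟩ <;>
  · have h1 : s * (1 / s) - 1 = 0 := by field_simp; ring
    have h2 : s ^ 2 = v / 3 := Real.sq_sqrt htpos.le
    simp only [h1]
    nlinarith [sq_nonneg a]
end

section
/- Finite-dimensional weak duality (abstract form): Let x,y∈Ω⊆ℝⁿ, let λ_i^L,λ_i^U≥0 with Σ_i(λ_i^L+λ_i^U)=1, μ_t≥0 with μ_t=0 for all but finitely many t. Suppose there exist vectors z_i^{*L}, z_i^{*U} (i∈I), x_t^* (t∈T), b* with ‖b*‖≤1, and ω*∈N(y;Ω) such that Σ_i(λ_i^L z_i^{*L}+λ_i^U z_i^{*U}) + Σ_t μ_t x_t^* + Σ_i(λ_i^L ε_i^U+λ_i^U ε_i^L) b* = −ω*. Suppose further g_t(x)≤0 and μ_t g_t(y)≥0 for all t, and that there exists ν in the polar of N(y;Ω) such that: for all i, (⟨z_i^{*L},ν⟩+ε_i^U‖x−y‖≥0 ⟹ f_i^L(x)≥f_i^L(y)−ε_i^U‖x−y‖)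 and (⟨z_i^{*U},ν⟩+ε_i^L‖x−y‖≥0 ⟹ f_i^U(x)≥f_i^U(y)−ε_i^L‖x−y‖); for all t, (g_t(x)≤g_t(y) ⟹ ⟨x_t^*,ν⟩≤0); and ⟨b*,ν⟩≤‖x−y‖. Then it is not the case that f_i^L(x)<f_i^L(y)−ε_i^U‖x−y‖ and f_i^U(x)<f_i^U(y)−ε_i^L‖x−y‖ for all i. -/
open RealInnerProductSpace
open scoped BigOperators

/-- Computational core of the weak duality Theorem 4.1(i), abstract finite-dimensional form. -/
theorem weak_duality_core {n m : ℕ} {τ : Type*}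
    (Ω N : Set (EuclideanSpace ℝ (Fin n)))
    (x y : EuclideanSpace ℝ (Fin n)) (hx : x ∈ Ω) (hy : y ∈ Ω)
    (fL fU : Fin m → EuclideanSpace ℝ (Fin n) → ℝ) (g : τ → EuclideanSpace ℝ (Fin n) → ℝ)
    (εL εU : Fin m → ℝ) (hε : ∀ i, 0 ≤ εL i ∧ εL i ≤ εU i)
    (lamL lamU : Fin m → ℝ) (hlamL : ∀ i, 0 ≤ lamL i) (hlamU : ∀ i, 0 ≤ lamU i)
    (hsum : ∑ i, (lamL i + lamU i) = 1)
    (μ : τ → ℝ) (hμ : ∀ t, 0 ≤ μ t) (hμfin : (Function.support μ).Finite)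
    (zL zU : Fin m → EuclideanSpace ℝ (Fin n)) (xt : τ → EuclideanSpace ℝ (Fin n))
    (b ω : EuclideanSpace ℝ (Fin n)) (hb : ‖b‖ ≤ 1) (hω : ω ∈ N)
    (heq : ∑ i, (lamL i • zL i + lamU i • zU i) + (∑ᶠ t, μ t • xt t)
        + (∑ i, (lamL i * εU i + lamU i * εL i)) • b = -ω)
    (hgx : ∀ t, g t x ≤ 0) (hμg : ∀ t, 0 ≤ μ t * g t y)
    (ν : EuclideanSpace ℝ (Fin n)) (hν : ∀ z ∈ N, ⟪z, ν⟫ ≤ 0)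
    (hL : ∀ i, ⟪zL i, ν⟫ + εU i * ‖x - y‖ ≥ 0 → fL i x ≥ fL i y - εU i * ‖x - y‖)
    (hU : ∀ i, ⟪zU i, ν⟫ + εL i * ‖x - y‖ ≥ 0 → fU i x ≥ fU i y - εL i * ‖x - y‖)
    (hg : ∀ t, g t x ≤ g t y → ⟪xt t, ν⟫ ≤ 0)
    (hbν : ⟪b, ν⟫ ≤ ‖x - y‖) :
    ¬ ∀ i, fL i x < fL i y - εU i * ‖x - y‖ ∧ fU i x < fU i y - εL i * ‖x - y‖ := by
  intro h
  have SL : ∀ i, ⟪zL i, ν⟫ + εU i * ‖x - y‖ < 0 := by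
    intro i
    by_contra hc
    exact absurd ((h i).1) (not_lt.mpr (hL i (le_of_not_gt hc)))
  have SU : ∀ i, ⟪zU i, ν⟫ + εL i * ‖x - y‖ < 0 := by
    intro i
    by_contra hc
    exact absurd ((h i).2) (not_lt.mpr (hU i (le_of_not_gt hc)))
  set C : ℝ := ∑ i, (lamL i * εU i + lamU i * εL i) with hC
  have hC0 : 0 ≤ C := by
    apply Finset.sum_nonneg
    intro i _
    have h1 := (hε i).1
    have h2 := (hε i).2
    nlinarith [hlamL i, hlamU i]
  have key : ⟪∑ i, (lamL i • zL i + lamU i • zU i) + (∑ᶠ t, μ t • xt t) + C • b, ν⟫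
      = ⟪-ω, ν⟫ := by rw [heq]
  have hω' : (0:ℝ) ≤ ⟪-ω, ν⟫ := by
    rw [inner_neg_left]
    linarith [hν ω hω]
  have hfin : (Function.support (fun t => μ t • xt t)).Finite :=
    hμfin.subset (Function.support_smul_subset_left μ xt)
  have hmap : ⟪∑ᶠ t, μ t • xt t, ν⟫ = ∑ᶠ t, ⟪μ t • xt t, ν⟫ := by
    have := ((innerₗ (EuclideanSpace ℝ (Fin n))).flip ν).toAddMonoidHom.map_finsum hfin
    exact this
  have hfinsum_le : ∑ᶠ t, ⟪μ t • xt t, ν⟫ ≤ 0 := by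
    have hne : ∀ t, ⟪μ t • xt t, ν⟫ ≤ 0 := by
      intro t
      rw [real_inner_smul_left]
      rcases eq_or_lt_of_le (hμ t) with hz | hp
      · simp [← hz]
      · have hgy : 0 ≤ g t y := nonneg_of_mul_nonneg_right (hμg t) hp
        exact mul_nonpos_of_nonneg_of_nonpos (hμ t) (hg t (le_trans (hgx t) hgy))
    have hfin2 : (Function.support (fun t => -⟪μ t • xt t, ν⟫)).Finite := by
      apply hfin.subset
      intro t ht
      simp only [Function.mem_support] at ht ⊢
      intro hc
      exact ht (by rw [hc]; simp)
    have h1 := finsum_nonneg (f := fun t => -⟪μ t • xt t, ν⟫) (fun t => neg_nonneg.mpr (hne t))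
    rw [finsum_neg_distrib] at h1
    linarith
  have expand : ⟪∑ i, (lamL i • zL i + lamU i • zU i) + (∑ᶠ t, μ t • xt t) + C • b, ν⟫
      = (∑ i, (lamL i * ⟪zL i, ν⟫ + lamU i * ⟪zU i, ν⟫)) + (∑ᶠ t, ⟪μ t • xt t, ν⟫)
        + C * ⟪b, ν⟫ := by
    rw [inner_add_left, inner_add_left, hmap, real_inner_smul_left, sum_inner]
    congr 2
    apply Finset.sum_congr rfl
    intro i _
    rw [inner_add_left, real_inner_smul_left, real_inner_smul_left]
  have hCb : C * ⟪b, ν⟫ ≤ C * ‖x - y‖ := mul_le_mul_of_nonneg_left hbν hC0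
  have hmainsum : (∑ i, (lamL i * ⟪zL i, ν⟫ + lamU i * ⟪zU i, ν⟫)) + C * ‖x - y‖
      = ∑ i, (lamL i * (⟪zL i, ν⟫ + εU i * ‖x - y‖) + lamU i * (⟪zU i, ν⟫ + εL i * ‖x - y‖)) := by
    rw [hC, Finset.sum_mul, ← Finset.sum_add_distrib]
    apply Finset.sum_congr rfl
    intro i _
    ring
  have hterm : ∀ i, lamL i * (⟪zL i, ν⟫ + εU i * ‖x - y‖)
      + lamU i * (⟪zU i, ν⟫ + εL i * ‖x - y‖) ≤ 0 := by
    intro i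
    have h1 := mul_nonpos_of_nonneg_of_nonpos (hlamL i) (SL i).le
    have h2 := mul_nonpos_of_nonneg_of_nonpos (hlamU i) (SU i).le
    linarith
  have hex : ∃ j, 0 < lamL j + lamU j := by
    by_contra hno
    push_neg at hno
    have : ∑ i, (lamL i + lamU i) ≤ 0 := Finset.sum_nonpos (fun i _ => hno i)
    linarith
  obtain ⟨j, hj⟩ := hex
  have hjterm : lamL j * (⟪zL j, ν⟫ + εU j * ‖x - y‖)
      + lamU j * (⟪zU j, ν⟫ + εL j * ‖x - y‖) < 0 := by
    rcases lt_or_ge 0 (lamL j) with hp | hl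
    · have h1 := mul_neg_of_pos_of_neg hp (SL j)
      have h2 := mul_nonpos_of_nonneg_of_nonpos (hlamU j) (SU j).le
      linarith
    · have hz : lamL j = 0 := le_antisymm hl (hlamL j)
      have hup : 0 < lamU j := by rw [hz] at hj; linarith
      have h1 := mul_neg_of_pos_of_neg hup (SU j)
      rw [hz]
      linarith
  have hstrict : ∑ i, (lamL i * (⟪zL i, ν⟫ + εU i * ‖x - y‖)
      + lamU i * (⟪zU i, ν⟫ + εL i * ‖x - y‖)) < 0 := by
    calc ∑ i, (lamL i * (⟪zL i, ν⟫ + εU i * ‖x - y‖)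
          + lamU i * (⟪zU i, ν⟫ + εL i * ‖x - y‖))
        < ∑ _i : Fin m, (0:ℝ) := by
          apply Finset.sum_lt_sum (fun i _ => hterm i) ⟨j, Finset.mem_univ j, hjterm⟩
      _ = 0 := by simp
  rw [expand] at key
  linarith [key ▸ hω', hCb, hfinsum_le, hmainsum ▸ hstrict]
end
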